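/- Let Y be a subspace of X. (1) If Y has property-SNP, then every f ∈ X* can be expressed as f = g + h with g ∈ Y_{lcs}^# and h ∈ Y^⊥, and this decomposition is unique. (2) If every f ∈ X* has a unique such decomposition f = g + h with g ∈ Y_{lcs}^# and h ∈ Y^⊥, then whenever f₁, f₂ ∈ Y_{lcs}^# satisfy f₁ + f₂ ∈ Y^⊥, one has f₁ + f₂ = 0. -/
import Mathlib


open scoped ENNReal

noncomputable section

/-- `χ_ρ(g) = sup { |g v| : ρ v ≤ 1 } ∈ [0,∞]`. -/
def chi {V : Type*} [AddCommGroup V] [Module ℝ V] [TopologicalSpace V]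
    (ρ : V → ℝ) (g : V →L[ℝ] ℝ) : ℝ≥0∞ :=
  ⨆ v ∈ {v : V | ρ v ≤ 1}, ENNReal.ofReal |g v|

/-- `χ_ρ^W(f)` for a functional `f` on a subspace `W`. -/
def chiSub {V : Type*} [AddCommGroup V] [Module ℝ V] [TopologicalSpace V]
    (W : Submodule ℝ V) (ρ : V → ℝ) (f : W →L[ℝ] ℝ) : ℝ≥0∞ :=
  chi (fun w : W => ρ (w : V)) f

/-- `ft` is a Hahn-Banach extension of the pair `(f, ρ)` on the subspace `W`. -/
def IsHBE {V : Type*} [AddCommGroup V] [Module ℝ V] [TopologicalSpace V]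
    (W : Submodule ℝ V) (ρ : V → ℝ) (f : W →L[ℝ] ℝ) (ft : V →L[ℝ] ℝ) : Prop :=
  ft.comp W.subtypeL = f ∧ chi ρ ft = chiSub W ρ f

/-- Property-SNP of a subspace `W` with respect to the family `p` of seminorms. -/
def SNP {V : Type*} [AddCommGroup V] [Module ℝ V] [TopologicalSpace V]
    {ι : Type*} (p : ι → V → ℝ) (W : Submodule ℝ V) : Prop :=
  ∀ f : W →L[ℝ] ℝ, ∃ i, chiSub W (p i) f < ⊤ ∧ ∃ ft : V →L[ℝ] ℝ,
    ∀ j, (∀ v, p i v ≤ p j v) →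
      IsHBE W (p j) f ft ∧ ∀ g : V →L[ℝ] ℝ, IsHBE W (p j) f g → g = ft

/-- The annihilator `W^⊥ = {g ∈ V* : g|_W = 0}`. -/
def ann {V : Type*} [AddCommGroup V] [Module ℝ V] [TopologicalSpace V]
    (W : Submodule ℝ V) : Set (V →L[ℝ] ℝ) :=
  {g | ∀ y ∈ W, g y = 0}

/-- `Y^#_μ = {f ∈ X* : χ_ρ^X(f) = χ_ρ^Y(f|_Y) < ∞ for all ρ ∈ 𝒫_μ}`. -/
def sharpMu {X : Type*} [AddCommGroup X] [Module ℝ X] [TopologicalSpace X]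
    {ι : Type*} (p : SeminormFamily ℝ X ι) (Y : Submodule ℝ X) (i : ι) :
    Set (X →L[ℝ] ℝ) :=
  {f | ∀ j, p i ≤ p j →
    chi (⇑(p j)) f = chiSub Y (⇑(p j)) (f.comp Y.subtypeL) ∧ chi (⇑(p j)) f < ⊤}

/-- `Y_{lcs}^# = ⋃_{μ ∈ 𝒫} Y^#_μ`. -/
def sharpLcs {X : Type*} [AddCommGroup X] [Module ℝ X] [TopologicalSpace X]
    {ι : Type*} (p : SeminormFamily ℝ X ι) (Y : Submodule ℝ X) :
    Set (X →L[ℝ] ℝ) :=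
  ⋃ i, sharpMu p Y i


lemma chi_neg' {V : Type*} [AddCommGroup V] [Module ℝ V] [TopologicalSpace V]
    (ρ : V → ℝ) (g : V →L[ℝ] ℝ) : chi ρ (-g) = chi ρ g := by
  unfold chi
  simp [abs_neg]

lemma chi_anti' {V : Type*} [AddCommGroup V] [Module ℝ V] [TopologicalSpace V]
    {ρ ρ' : V → ℝ} (h : ∀ v, ρ v ≤ ρ' v) (g : V →L[ℝ] ℝ) :
    chi ρ' g ≤ chi ρ g := by
  unfold chi
  exact biSup_mono (fun v hv => le_trans (h v) hv)

theorem statement15 {X : Type*} [AddCommGroup X] [Module ℝ X] [TopologicalSpace X]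
    {ι : Type*} [Nonempty ι] (p : SeminormFamily ℝ X ι) (hp : WithSeminorms p)
    (hdir : Directed (· ≤ ·) p) (Y : Submodule ℝ X) :
    (SNP (fun i => ⇑(p i)) Y →
      ∀ f : X →L[ℝ] ℝ, ∃ g ∈ sharpLcs p Y, ∃ h ∈ ann Y, f = g + h ∧
        ∀ g' ∈ sharpLcs p Y, ∀ h' ∈ ann Y, f = g' + h' → g' = g ∧ h' = h) ∧
    ((∀ f : X →L[ℝ] ℝ, ∃ g ∈ sharpLcs p Y, ∃ h ∈ ann Y, f = g + h ∧
        ∀ g' ∈ sharpLcs p Y, ∀ h' ∈ ann Y, f = g' + h' → g' = g ∧ h' = h) →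
      ∀ f₁ ∈ sharpLcs p Y, ∀ f₂ ∈ sharpLcs p Y, f₁ + f₂ ∈ ann Y → f₁ + f₂ = 0) := by
  constructor
  · -- Part (1)
    intro hSNP f
    obtain ⟨i, hfin, ft, hft⟩ := hSNP (f.comp Y.subtypeL)
    obtain ⟨⟨hcompi, hchii⟩, _⟩ := hft i (fun v => le_rfl)
    have hgmem : ft ∈ sharpMu p Y i := by
      intro j hij
      obtain ⟨⟨hcomp, hchi⟩, _⟩ := hft j (fun v => hij v)
      rw [hcomp] at *
      refine ⟨hchi, ?_⟩
      rw [hchi]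
      calc chiSub Y (⇑(p j)) (f.comp Y.subtypeL)
          ≤ chiSub Y (⇑(p i)) (f.comp Y.subtypeL) :=
            chi_anti' (fun w : Y => hij (w : X)) _
        _ < ⊤ := hfin
    refine ⟨ft, Set.mem_iUnion.mpr ⟨i, hgmem⟩, f - ft, ?_, by abel, ?_⟩
    · intro y hy
      have := congrArg (fun (u : Y →L[ℝ] ℝ) => u ⟨y, hy⟩) hcompi
      simp only [ContinuousLinearMap.comp_apply, Submodule.subtypeL_apply] at this
      simp [this]
    · rintro g' hg' h' hh' hfe
      obtain ⟨j, hj⟩ := Set.mem_iUnion.mp hg'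
      obtain ⟨k, hik, hjk⟩ := hdir i j
      have hcomp' : g'.comp Y.subtypeL = f.comp Y.subtypeL := by
        ext w
        have h0 := hh' (w : X) w.2
        have : f (w : X) = g' (w : X) + h' (w : X) := by rw [hfe]; rfl
        simp only [ContinuousLinearMap.comp_apply, Submodule.subtypeL_apply]
        rw [this, h0, add_zero]
      obtain ⟨hchik, _⟩ := hj k hjk
      rw [hcomp'] at hchik
      obtain ⟨_, huniq⟩ := hft k (fun v => hik v)
      have hge : g' = ft := huniq g' ⟨hcomp', hchik⟩
      exact ⟨hge, by rw [← hge, hfe]; abel⟩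
  · -- Part (2)
    intro hdec f₁ hf₁ f₂ hf₂ hann
    obtain ⟨g, hg, h, hh, heq, huni⟩ := hdec f₁
    have h0 : (0 : X →L[ℝ] ℝ) ∈ ann Y := fun y _ => rfl
    have h1 : f₁ = g := (huni f₁ hf₁ 0 h0 (by abel)).1
    have hnegmem : -f₂ ∈ sharpLcs p Y := by
      obtain ⟨j, hj⟩ := Set.mem_iUnion.mp hf₂
      refine Set.mem_iUnion.mpr ⟨j, fun k hk => ?_⟩
      obtain ⟨h1', h2'⟩ := hj k hk
      have hcn : (-f₂).comp Y.subtypeL = -(f₂.comp Y.subtypeL) := by ext w; simp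
      rw [chi_neg', hcn]
      unfold chiSub
      rw [chi_neg']
      exact ⟨h1', h2'⟩
    have h2 : -f₂ = g := (huni (-f₂) hnegmem (f₁ + f₂) hann (by abel)).1
    rw [h1, ← h2]
    abel
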